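/- arXiv:math/0202292 — 2 statements merged into one kernel-verified Lean document; each statement's English description precedes it below -/
import Mathlib

section
/- Fix $N\ge 2$ and $q\in\mathbb{C}^\times$ not a root of unity. For $m\ne0$ set $s_{|m|}=(1+q^{2|m|}+\cdots+q^{2(N-1)|m|})^{1/2}$ (a fixed square root) and define $a_{Nm}=q^{Nm+|m|/2}\big(\frac{|m|}{m}\,\frac{\ep_{1m}+q^{|m|}\ep_{2m}+\cdots+q^{(N-1)|m|}\ep_{Nm}}{s_{|m|}}+\ep_{Nm}\big)$ in the Heisenberg algebra with $[\ep_{im},\ep_{jn}]=\frac{[m]}{m}[mc]\delta_{ij}\delta_{m,-n}$. Then $[a_{Nm},a_{Nn}]=0$ for all nonzero $m,n$. -/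
private lemma my_lie_sum {L : Type*} [LieRing L] {ι : Type*} (x : L) (s : Finset ι) (f : ι → L) :
    ⁅x, ∑ i ∈ s, f i⁆ = ∑ i ∈ s, ⁅x, f i⁆ := by
  induction s using Finset.cons_induction with
  | empty => simp
  | cons a s ha ih => simp [Finset.sum_cons, ih]

private lemma my_sum_lie {L : Type*} [LieRing L] {ι : Type*} (x : L) (s : Finset ι) (f : ι → L) :
    ⁅∑ i ∈ s, f i, x⁆ = ∑ i ∈ s, ⁅f i, x⁆ := by
  induction s using Finset.cons_induction with
  | empty => simp
  | cons a s ha ih => simp [Finset.sum_cons, ih]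


/-- With `a_{Nm} = q^{Nm+|m|/2}( (|m|/m)·(ε_{1m} + q^{|m|}ε_{2m} + ⋯ + q^{(N-1)|m|}ε_{Nm})/s_{|m|}
+ ε_{Nm})` in the Heisenberg algebra `[ε_{im}, ε_{jn}] = ([m]/m)[mc] δ_{ij} δ_{m,-n}`
(with `t = q^{1/2}`, `s_{|m|}² = 1 + q^{2|m|} + ⋯ + q^{2(N-1)|m|}`), one has
`[a_{Nm}, a_{Nn}] = 0` for all nonzero `m, n`. -/
theorem stmt15 (N : ℕ) (hN : 2 ≤ N) (L : Type*) [LieRing L] [LieAlgebra ℂ L]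
    (q t qc : ℂ) (hq0 : q ≠ 0) (ht : t ≠ 0) (hqt : q = t ^ 2)
    (hroot : ∀ k : ℕ, 0 < k → q ^ k ≠ 1)
    (K : L) (hK : ∀ x : L, ⁅K, x⁆ = 0)
    (e : ℕ → ℤ → L)
    (hrel : ∀ (i j : ℕ) (m n : ℤ),
      ⁅e i m, e j n⁆ = (if i = j ∧ n = -m then
          (q ^ m - q ^ (-m)) / (q - q⁻¹) / (m : ℂ)
            * ((qc ^ m - qc ^ (-m)) / (q - q⁻¹)) else 0) • K)
    (s : ℕ → ℂ) (hs0 : ∀ k, s k ≠ 0)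
    (hs : ∀ k : ℕ, s k ^ 2 = ∑ j ∈ Finset.range N, q ^ (2 * j * k))
    (aN : ℤ → L)
    (haN : ∀ m : ℤ, aN m = (q ^ ((N : ℤ) * m) * t ^ (m.natAbs : ℤ)) •
        (((m.sign : ℂ) / s m.natAbs) •
            (∑ k ∈ Finset.range N, q ^ ((k : ℤ) * (m.natAbs : ℤ)) • e (k + 1) m)
          + e N m)) :
    ∀ m n : ℤ, m ≠ 0 → n ≠ 0 → ⁅aN m, aN n⁆ = 0 := by
  intro m n hm hn
  by_cases hmn : n = -m
  · subst hmn
    set B : ℂ := (q ^ m - q ^ (-m)) / (q - q⁻¹) / (m : ℂ) * ((qc ^ m - qc ^ (-m)) / (q - q⁻¹)) with hB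
    clear_value B
    have hbr : ∀ i j : ℕ, ⁅e i m, e j (-m)⁆ = (if i = j then B else 0) • K := by
      intro i j; rw [hrel, hB]; simp only [neg_neg, eq_self_iff_true, and_true]
    rw [haN, haN]
    simp only [smul_lie, lie_smul, lie_add, add_lie, my_lie_sum, my_sum_lie, hbr,
      Int.natAbs_neg, Int.sign_neg, smul_smul, mul_ite, mul_zero, ite_smul, zero_smul,
      add_left_inj, Nat.add_right_cancel_iff]
    simp only [smul_add, Finset.smul_sum, smul_ite, smul_zero, smul_smul, Finset.sum_ite_eq, Finset.sum_ite_eq, Finset.mem_range, if_true]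
    simp only [← zero_smul ℂ K, ← ite_smul, ← Finset.sum_smul, ← add_smul]
    congr 1
    simp only [Finset.sum_ite_eq', Finset.mem_range,
      show ∀ i : ℕ, (N = i + 1) = (i = N - 1) from fun i => propext (by omega),
      show ∀ i : ℕ, (i + 1 = N) = (i = N - 1) from fun i => propext (by omega)]
    rw [Finset.sum_add_distrib, Finset.sum_ite_of_true (fun i hi => Finset.mem_range.mp hi),
      Finset.sum_ite_eq']
    simp only [Finset.mem_range, show N - 1 < N by omega, if_true]
    have hpow : ∀ x : ℕ, q ^ ((x : ℤ) * (m.natAbs : ℤ)) * q ^ ((x : ℤ) * (m.natAbs : ℤ))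
        = q ^ (2 * x * m.natAbs) := by
      intro x
      rw [← zpow_natCast q (2 * x * m.natAbs), ← zpow_add₀ hq0]
      congr 1; push_cast; ring
    have key : ∑ x ∈ Finset.range N,
        q ^ ((N : ℤ) * -m) * t ^ (m.natAbs : ℤ) *
          (((-m.sign : ℤ) : ℂ) / s m.natAbs *
            (q ^ ((x : ℤ) * (m.natAbs : ℤ)) * (q ^ ((N : ℤ) * m) * t ^ (m.natAbs : ℤ)) *
              ((m.sign : ℂ) / s m.natAbs * (q ^ ((x : ℤ) * (m.natAbs : ℤ)) * B))))
        = (q ^ ((N : ℤ) * -m) * t ^ (m.natAbs : ℤ) * (((-m.sign : ℤ) : ℂ) / s m.natAbs) *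
            (q ^ ((N : ℤ) * m) * t ^ (m.natAbs : ℤ)) * ((m.sign : ℂ) / s m.natAbs) * B) *
          ∑ x ∈ Finset.range N, q ^ (2 * x * m.natAbs) := by
      rw [Finset.mul_sum]
      refine Finset.sum_congr rfl fun x _ => ?_
      rw [← hpow x]; ring
    rw [key, ← hs m.natAbs]
    have hσ : ((m.sign : ℤ) : ℂ) = 1 ∨ ((m.sign : ℤ) : ℂ) = -1 := by
      rcases lt_trichotomy m 0 with h | h | h
      · right; rw [Int.sign_eq_neg_one_of_neg h]; norm_num
      · exact absurd h hm
      · left; rw [Int.sign_eq_one_of_pos h]; norm_num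
    have hqNm : q ^ ((N : ℤ) * -m) * q ^ ((N : ℤ) * m) = 1 := by
      rw [← zpow_add₀ hq0]; norm_num
    have hNm0 : q ^ ((N : ℤ) * m) ≠ 0 := zpow_ne_zero _ hq0
    rw [show (N : ℤ) * -m = -((N : ℤ) * m) by ring, zpow_neg]
    rcases hσ with h | h <;>
      · push_cast [h]
        field_simp [hNm0, hs0 m.natAbs]
        ring
  · rw [haN, haN]
    simp [smul_lie, lie_smul, lie_add, add_lie, my_lie_sum, my_sum_lie, hrel, hmn]
end

section
/- In the setting of the previous Heisenberg algebra, with $\oh_{im}=q^{im}(q^{|m|/2}\ep_{im}-q^{-|m|/2}\ep_{i+1,m})$ for $1\le i\le N-1$ and $a_{Nm}$ as defined there, one has $[\oh_{im}, a_{Nn}] = -\delta_{i,N-1}\,\frac{q^{-m}}{m}[m][mc]\,\delta_{m,-n}$ for all $1\le i\le N-1$ and nonzero integers $m,n$. -/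
/-- With `h̄_{im} = q^{im}(q^{|m|/2} ε_{im} - q^{-|m|/2} ε_{i+1,m})` for `1 ≤ i ≤ N-1` and
`a_{Nm}` as in Theorem 4.16, one has
`[h̄_{im}, a_{Nn}] = -δ_{i,N-1} (q^{-m}/m)[m][mc] δ_{m,-n}`. -/
theorem stmt16 (N : ℕ) (hN : 2 ≤ N) (L : Type*) [LieRing L] [LieAlgebra ℂ L]
    (q t qc : ℂ) (hq0 : q ≠ 0) (ht : t ≠ 0) (hqt : q = t ^ 2)
    (hroot : ∀ k : ℕ, 0 < k → q ^ k ≠ 1)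
    (K : L) (hK : ∀ x : L, ⁅K, x⁆ = 0)
    (e : ℕ → ℤ → L)
    (hrel : ∀ (i j : ℕ) (m n : ℤ),
      ⁅e i m, e j n⁆ = (if i = j ∧ n = -m then
          (q ^ m - q ^ (-m)) / (q - q⁻¹) / (m : ℂ)
            * ((qc ^ m - qc ^ (-m)) / (q - q⁻¹)) else 0) • K)
    (s : ℕ → ℂ) (hs0 : ∀ k, s k ≠ 0)
    (hs : ∀ k : ℕ, s k ^ 2 = ∑ j ∈ Finset.range N, q ^ (2 * j * k))
    (aN : ℤ → L)
    (haN : ∀ m : ℤ, aN m = (q ^ ((N : ℤ) * m) * t ^ (m.natAbs : ℤ)) •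
        (((m.sign : ℂ) / s m.natAbs) •
            (∑ k ∈ Finset.range N, q ^ ((k : ℤ) * (m.natAbs : ℤ)) • e (k + 1) m)
          + e N m))
    (oh : ℕ → ℤ → L)
    (hoh : ∀ (i : ℕ) (m : ℤ), oh i m = q ^ ((i : ℤ) * m) •
        (t ^ (m.natAbs : ℤ) • e i m - t ^ (-(m.natAbs : ℤ)) • e (i + 1) m)) :
    ∀ i : ℕ, 1 ≤ i → i ≤ N - 1 → ∀ m n : ℤ, m ≠ 0 → n ≠ 0 →
      ⁅oh i m, aN n⁆ = (if i = N - 1 ∧ n = -m then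
          -(q ^ (-m) / (m : ℂ)) * ((q ^ m - q ^ (-m)) / (q - q⁻¹))
            * ((qc ^ m - qc ^ (-m)) / (q - q⁻¹)) else 0) • K := by
  intro i hi1 hiN m n hm hn
  have lie_sum' : ∀ (x : L) (f : ℕ → L) (u : Finset ℕ),
      ⁅x, ∑ k ∈ u, f k⁆ = ∑ k ∈ u, ⁅x, f k⁆ :=
    fun x f u => map_sum (LieAlgebra.ad ℂ L x) f u
  have hq2 : ∀ z : ℤ, q ^ z = t ^ (2 * z) := by
    intro z
    rw [hqt, ← zpow_natCast t 2, ← zpow_mul]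
    norm_num
  have hB : ∀ j : ℕ, ⁅e j m, aN n⁆ =
      ((q ^ ((N : ℤ) * n) * t ^ (n.natAbs : ℤ)) *
        (((n.sign : ℂ) / s n.natAbs) *
            (∑ k ∈ Finset.range N, q ^ ((k : ℤ) * (n.natAbs : ℤ)) *
              (if j = k + 1 ∧ n = -m then
                (q ^ m - q ^ (-m)) / (q - q⁻¹) / (m : ℂ)
                  * ((qc ^ m - qc ^ (-m)) / (q - q⁻¹)) else 0))
          + (if j = N ∧ n = -m then
                (q ^ m - q ^ (-m)) / (q - q⁻¹) / (m : ℂ)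
                  * ((qc ^ m - qc ^ (-m)) / (q - q⁻¹)) else 0))) • K := by
    intro j
    rw [haN, lie_smul, lie_add, lie_smul, lie_sum']
    simp only [lie_smul, hrel, smul_smul]
    rw [← Finset.sum_smul, smul_smul, ← add_smul, smul_smul]
  rw [hoh, smul_lie, sub_lie, smul_lie, smul_lie, hB i, hB (i + 1),
    smul_smul, smul_smul, ← sub_smul, smul_smul]
  congr 1
  by_cases hnm : n = -m
  · subst hnm
    simp only [Int.natAbs_neg, neg_neg, and_true]
    have hsum : ∀ j : ℕ, 1 ≤ j → j ≤ N →
        (∑ k ∈ Finset.range N, q ^ ((k : ℤ) * (m.natAbs : ℤ)) *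
          (if j = k + 1 then
            (q ^ m - q ^ (-m)) / (q - q⁻¹) / (m : ℂ)
              * ((qc ^ m - qc ^ (-m)) / (q - q⁻¹)) else 0))
        = q ^ (((j : ℤ) - 1) * (m.natAbs : ℤ)) *
            ((q ^ m - q ^ (-m)) / (q - q⁻¹) / (m : ℂ)
              * ((qc ^ m - qc ^ (-m)) / (q - q⁻¹))) := by
      intro j h1 h2
      have key : ∀ k ∈ Finset.range N,
          q ^ ((k : ℤ) * (m.natAbs : ℤ)) *
            (if j = k + 1 then
              (q ^ m - q ^ (-m)) / (q - q⁻¹) / (m : ℂ)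
                * ((qc ^ m - qc ^ (-m)) / (q - q⁻¹)) else 0)
          = if k = j - 1 then q ^ ((k : ℤ) * (m.natAbs : ℤ)) *
              ((q ^ m - q ^ (-m)) / (q - q⁻¹) / (m : ℂ)
                * ((qc ^ m - qc ^ (-m)) / (q - q⁻¹))) else 0 := by
        intro k _
        by_cases h : j = k + 1
        · rw [if_pos h, if_pos (by omega)]
        · rw [if_neg h, if_neg (by omega), mul_zero]
      rw [Finset.sum_congr rfl key, Finset.sum_ite_eq' (Finset.range N) (j - 1),
        if_pos (Finset.mem_range.mpr (by omega))]
      have : ((j - 1 : ℕ) : ℤ) = (j : ℤ) - 1 := by omega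
      rw [this]
    rw [hsum i hi1 (by omega), hsum (i + 1) (by omega) (by omega)]
    have hcast : (((i + 1 : ℕ) : ℤ) - 1) = (i : ℤ) := by push_cast; ring
    rw [hcast]
    have e1 : t ^ (m.natAbs : ℤ) * t ^ (-(m.natAbs : ℤ)) = 1 := by
      rw [← zpow_add₀ ht, add_neg_cancel, zpow_zero]
    have e2 : t ^ (m.natAbs : ℤ) * q ^ (((i : ℤ) - 1) * (m.natAbs : ℤ))
        = t ^ (-(m.natAbs : ℤ)) * q ^ ((i : ℤ) * (m.natAbs : ℤ)) := by
      rw [hq2, hq2, ← zpow_add₀ ht, ← zpow_add₀ ht]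
      congr 1
      ring
    by_cases hii : i = N - 1
    · rw [if_pos hii, if_pos (by omega : i + 1 = N), if_neg (by omega : ¬ i = N)]
      have e3 : q ^ ((i : ℤ) * m) * q ^ ((N : ℤ) * (-m)) = q ^ (-m) := by
        rw [← zpow_add₀ hq0]
        congr 1
        have : (i : ℤ) = (N : ℤ) - 1 := by omega
        rw [this]; ring
      linear_combination (q ^ ((i : ℤ) * m) * q ^ ((N : ℤ) * (-m)) *
          (((-m).sign : ℂ) / s m.natAbs) *
          ((q ^ m - q ^ (-m)) / (q - q⁻¹) / (m : ℂ)
            * ((qc ^ m - qc ^ (-m)) / (q - q⁻¹))) * t ^ (m.natAbs : ℤ)) * e2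
        + (-(q ^ ((i : ℤ) * m) * q ^ ((N : ℤ) * (-m)) *
            ((q ^ m - q ^ (-m)) / (q - q⁻¹) / (m : ℂ)
              * ((qc ^ m - qc ^ (-m)) / (q - q⁻¹))))) * e1
        + (-((q ^ m - q ^ (-m)) / (q - q⁻¹) / (m : ℂ)
              * ((qc ^ m - qc ^ (-m)) / (q - q⁻¹)))) * e3
    · rw [if_neg hii, if_neg (by omega : ¬ (i + 1 = N)), if_neg (by omega : ¬ i = N)]
      linear_combination (q ^ ((i : ℤ) * m) * q ^ ((N : ℤ) * (-m)) *
          (((-m).sign : ℂ) / s m.natAbs) *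
          ((q ^ m - q ^ (-m)) / (q - q⁻¹) / (m : ℂ)
            * ((qc ^ m - qc ^ (-m)) / (q - q⁻¹))) * t ^ (m.natAbs : ℤ)) * e2
  · simp [hnm]
end
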